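/- arXiv:2208.10034 — 2 statements merged into one kernel-verified Lean document; each statement's English description precedes it below -/
import Mathlib

section
/- Let R be a commutative ring and M a nonzero finitely generated R-module containing a submodule isomorphic to R/Ann_R(M) (e.g., M an R-algebra faithful over R/Ann_R(M)). If for every r ∈ R multiplication by r on M is zero or bijective, then the prime ideal Ann_R(M) is a maximal ideal of R. -/
/-- If a nonzero finitely generated module `M` over a commutative ring `R` contains a
submodule isomorphic to `R/Ann_R(M)` and every `r : R` acts on `M` by zero or
bijectively, then `Ann_R(M)` is a maximal ideal. -/
theorem stmt3 {R M : Type*} [CommRing R] [AddCommGroup M] [Module R M] [Nontrivial M]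
    [Module.Finite R M]
    (hsub : ∃ N : Submodule R M, Nonempty (N ≃ₗ[R] (R ⧸ Module.annihilator R M)))
    (h : ∀ r : R, (∀ m : M, r • m = 0) ∨ Function.Bijective (fun m : M => r • m)) :
    (Module.annihilator R M).IsMaximal := by
  rw [Ideal.isMaximal_iff]
  constructor
  · intro h1
    obtain ⟨m, hm⟩ := exists_ne (0 : M)
    exact hm (by simpa using Module.mem_annihilator.mp h1 m)
  · intro J r hIJ hr hrJ
    have hbij : Function.Bijective (fun m : M => r • m) := by
      rcases h r with h0 | hb
      · exact absurd (Module.mem_annihilator.mpr h0) hr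
      · exact hb
    have hle : (⊤ : Submodule R M) ≤ Ideal.span {r} • ⊤ := by
      intro m _
      obtain ⟨m', hm'⟩ := hbij.2 m
      rw [← hm']
      exact Submodule.smul_mem_smul (Ideal.subset_span rfl) Submodule.mem_top
    obtain ⟨s, hs1, hs0⟩ :=
      Submodule.exists_sub_one_mem_and_smul_eq_zero_of_fg_of_le_smul (Ideal.span {r})
        ⊤ (Module.Finite.fg_top) hle
    have hsA : s ∈ Module.annihilator R M :=
      Module.mem_annihilator.mpr fun m => hs0 m Submodule.mem_top
    have : (1 : R) = s - (s - 1) := by ring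
    rw [this]
    exact J.sub_mem (hIJ hsA) (Ideal.span_le.mpr (by simpa using hrJ) hs1)
end

section
/- Let R be a commutative ring and M a nonzero R-module whose endomorphism condition holds: for each r ∈ R, multiplication by r on M is zero or bijective. Assume furthermore M is finitely generated over R and contains an element with annihilator equal to Ann_R(M). Then R/Ann_R(M) is a field or a positive-dimensional domain; and in the latter case, multiplication by every nonzero class r̄ ∈ R/Ann_R(M) on M is bijective, forcing M ⊗_R R/(r) = 0 for some non-unit r ∉ Ann_R(M), contradicting Supp(M) = V(Ann_R(M)). Hence R/Ann_R(M) is a field, i.e., Ann_R(M) is maximal. -/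
/-- Let `M` be a nonzero finitely generated module over a commutative ring `R` such that
every `r : R` acts on `M` by zero or bijectively, and suppose `M` contains an element
whose annihilator is exactly `Ann_R(M)`. Then `Ann_R(M)` is a maximal ideal. -/
theorem stmt14 {R M : Type*} [CommRing R] [AddCommGroup M] [Module R M] [Nontrivial M]
    [Module.Finite R M]
    (h : ∀ r : R, (∀ m : M, r • m = 0) ∨ Function.Bijective (fun m : M => r • m))
    (hel : ∃ m : M, Ideal.torsionOf R M m = Module.annihilator R M) :
    (Module.annihilator R M).IsMaximal := by
  rw [Ideal.isMaximal_iff]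
  constructor
  · intro h1
    obtain ⟨m, hm⟩ := exists_ne (0 : M)
    have := Module.mem_annihilator.mp h1 m
    simp at this
    exact hm this
  · intro J x hJ hx hxJ
    have hbij : Function.Bijective (fun m : M => x • m) := by
      rcases h x with hz | hb
      · exact absurd (Module.mem_annihilator.mpr hz) hx
      · exact hb
    -- M = x • M
    have hle : (⊤ : Submodule R M) ≤ (Ideal.span {x}) • ⊤ := by
      intro m _
      obtain ⟨n, hn⟩ := hbij.2 m
      rw [← hn]
      exact Submodule.smul_mem_smul (Ideal.mem_span_singleton_self x) trivial
    obtain ⟨r, hr1, hr2⟩ :=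
      Submodule.exists_sub_one_mem_and_smul_eq_zero_of_fg_of_le_smul (Ideal.span {x})
        (⊤ : Submodule R M) (Module.Finite.fg_top) hle
    have hrann : r ∈ Module.annihilator R M :=
      Module.mem_annihilator.mpr fun m => hr2 m trivial
    have h1J : (1 : R) = r - (r - 1) := by ring
    rw [h1J]
    exact J.sub_mem (hJ hrann) ((Ideal.span_singleton_le_iff_mem J).mpr hxJ hr1)
end
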